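/- arXiv:1601.08038 — 3 statements merged into one kernel-verified Lean document; each statement's English description precedes it below -/
import Mathlib

section
/- Let p, μ ∈ C¹((0,∞)) with μ(z) > 0 for all z, and define φ(z) = ∫₁^z μ(s)/s² ds. Suppose (ρ, u) is a C² solution of the one-dimensional compressible Navier–Stokes system ∂ₜρ + ∂ₓ(ρu) = 0, ∂ₜ(ρu) + ∂ₓ(ρu²) = ∂ₓ(μ(ρ)∂ₓu) − ∂ₓp(ρ) on [0,T] × ℝ with ρ > 0. Then v := u + ∂ₓ(φ(ρ)) satisfies pointwise ∂ₜ(ρv) + ∂ₓ(ρuv) + ∂ₓ(p(ρ)) = 0. -/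
open Set intervalIntegral

section aux
variable {f : ℝ × ℝ → ℝ}

lemma hd_fst (hf : Differentiable ℝ f) (t x : ℝ) :
    HasDerivAt (fun s => f (s, x)) (fderiv ℝ f (t, x) (1, 0)) t := by
  have h : HasDerivAt (fun s : ℝ => ((s, x) : ℝ × ℝ)) ((1 : ℝ), (0 : ℝ)) t :=
    HasDerivAt.prodMk (hasDerivAt_id t) (hasDerivAt_const t x)
  exact (hf (t, x)).hasFDerivAt.comp_hasDerivAt t h

lemma hd_snd (hf : Differentiable ℝ f) (t x : ℝ) :
    HasDerivAt (fun y => f (t, y)) (fderiv ℝ f (t, x) (0, 1)) x := by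
  have h : HasDerivAt (fun y : ℝ => ((t, y) : ℝ × ℝ)) ((0 : ℝ), (1 : ℝ)) x :=
    HasDerivAt.prodMk (hasDerivAt_const x t) (hasDerivAt_id x)
  exact (hf (t, x)).hasFDerivAt.comp_hasDerivAt x h

lemma pd_contDiff (hf : ContDiff ℝ 2 f) (w : ℝ × ℝ) :
    ContDiff ℝ 1 (fun q => fderiv ℝ f q w) :=
  (hf.fderiv_right (by norm_num)).clm_apply contDiff_const

lemma pd_fderiv (hf : ContDiff ℝ 2 f) (w : ℝ × ℝ) (q v : ℝ × ℝ) :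
    fderiv ℝ (fun q' => fderiv ℝ f q' w) q v = fderiv ℝ (fderiv ℝ f) q v w := by
  have hdf : DifferentiableAt ℝ (fderiv ℝ f) q :=
    ((hf.fderiv_right (m := 1) (by norm_num)).differentiable one_ne_zero) q
  rw [fderiv_clm_apply hdf (differentiableAt_const w)]
  simp

lemma clairaut (hf : ContDiff ℝ 2 f) (t x : ℝ) :
    deriv (fun s => fderiv ℝ f (s, x) (0, 1)) t
      = deriv (fun y => fderiv ℝ f (t, y) (1, 0)) x := by
  have h1 : ContDiff ℝ 1 (fun q => fderiv ℝ f q (0, 1) : ℝ × ℝ → ℝ) := pd_contDiff hf _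
  have h2 : ContDiff ℝ 1 (fun q => fderiv ℝ f q (1, 0) : ℝ × ℝ → ℝ) := pd_contDiff hf _
  rw [(hd_fst (h1.differentiable one_ne_zero) t x).deriv,
      (hd_snd (h2.differentiable one_ne_zero) t x).deriv,
      pd_fderiv hf _ _ _, pd_fderiv hf _ _ _]
  exact (hf.contDiffAt.isSymmSndFDerivAt (by norm_num)) _ _

end aux

noncomputable def pdt (f : ℝ → ℝ → ℝ) (t x : ℝ) : ℝ :=
  fderiv ℝ (fun q : ℝ × ℝ => f q.1 q.2) (t, x) (1, 0)

noncomputable def pdx (f : ℝ → ℝ → ℝ) (t x : ℝ) : ℝ :=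
  fderiv ℝ (fun q : ℝ × ℝ => f q.1 q.2) (t, x) (0, 1)

noncomputable def pdtx (f : ℝ → ℝ → ℝ) (t x : ℝ) : ℝ :=
  fderiv ℝ (fun q : ℝ × ℝ => fderiv ℝ (fun q' : ℝ × ℝ => f q'.1 q'.2) q (0, 1)) (t, x) (1, 0)

noncomputable def pdxx (f : ℝ → ℝ → ℝ) (t x : ℝ) : ℝ :=
  fderiv ℝ (fun q : ℝ × ℝ => fderiv ℝ (fun q' : ℝ × ℝ => f q'.1 q'.2) q (0, 1)) (t, x) (0, 1)

lemma hd_t (f : ℝ → ℝ → ℝ) (hf : ContDiff ℝ 2 (fun q : ℝ × ℝ => f q.1 q.2)) (t x : ℝ) :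
    HasDerivAt (fun s => f s x) (pdt f t x) t :=
  hd_fst (hf.differentiable (by norm_num)) t x

lemma hd_x (f : ℝ → ℝ → ℝ) (hf : ContDiff ℝ 2 (fun q : ℝ × ℝ => f q.1 q.2)) (t x : ℝ) :
    HasDerivAt (fun y => f t y) (pdx f t x) x :=
  hd_snd (hf.differentiable (by norm_num)) t x

lemma hd_pdx_t (f : ℝ → ℝ → ℝ) (hf : ContDiff ℝ 2 (fun q : ℝ × ℝ => f q.1 q.2)) (t x : ℝ) :
    HasDerivAt (fun s => pdx f s x) (pdtx f t x) t :=
  hd_fst ((pd_contDiff hf (0, 1)).differentiable one_ne_zero) t x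

lemma hd_pdx_x (f : ℝ → ℝ → ℝ) (hf : ContDiff ℝ 2 (fun q : ℝ × ℝ => f q.1 q.2)) (t x : ℝ) :
    HasDerivAt (fun y => pdx f t y) (pdxx f t x) x :=
  hd_snd ((pd_contDiff hf (0, 1)).differentiable one_ne_zero) t x

lemma clairaut' (f : ℝ → ℝ → ℝ) (hf : ContDiff ℝ 2 (fun q : ℝ × ℝ => f q.1 q.2)) (t x : ℝ) :
    deriv (fun s => pdx f s x) t = deriv (fun y => pdt f t y) x :=
  clairaut hf t x

theorem BD_entropy_identity
    (T : ℝ) (hT : 0 < T)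
    (p μ : ℝ → ℝ)
    (hp : ContDiffOn ℝ 1 p (Ioi 0)) (hμ : ContDiffOn ℝ 1 μ (Ioi 0))
    (hμpos : ∀ z, 0 < z → 0 < μ z)
    (φ : ℝ → ℝ) (hφ : φ = fun z => ∫ s in (1:ℝ)..z, μ s / s ^ 2)
    (ρ u : ℝ → ℝ → ℝ)
    (hρ : ContDiff ℝ 2 (fun q : ℝ × ℝ => ρ q.1 q.2))
    (hu : ContDiff ℝ 2 (fun q : ℝ × ℝ => u q.1 q.2))
    (hρpos : ∀ t x, 0 < ρ t x)
    (hcont : ∀ t ∈ Icc (0:ℝ) T, ∀ x : ℝ,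
      deriv (fun s => ρ s x) t + deriv (fun y => ρ t y * u t y) x = 0)
    (hmom : ∀ t ∈ Icc (0:ℝ) T, ∀ x : ℝ,
      deriv (fun s => ρ s x * u s x) t + deriv (fun y => ρ t y * u t y ^ 2) x
        = deriv (fun y => μ (ρ t y) * deriv (fun y' => u t y') y) x
          - deriv (fun y => p (ρ t y)) x)
    (v : ℝ → ℝ → ℝ)
    (hv : v = fun t x => u t x + deriv (fun y => φ (ρ t y)) x) :
    ∀ t ∈ Icc (0:ℝ) T, ∀ x : ℝ,
      deriv (fun s => ρ s x * v s x) t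
        + deriv (fun y => ρ t y * u t y * v t y) x
        + deriv (fun y => p (ρ t y)) x = 0 := by
  -- derivative of φ
  have hφ' : ∀ z : ℝ, 0 < z → HasDerivAt φ (μ z / z ^ 2) z := by
    intro z hz
    subst hφ
    have hcg : ContinuousOn (fun s : ℝ => μ s / s ^ 2) (Ioi 0) :=
      hμ.continuousOn.div ((continuous_pow 2).continuousOn)
        (fun s hs => pow_ne_zero 2 (ne_of_gt hs))
    have hsub : uIcc (1 : ℝ) z ⊆ Ioi 0 := by
      intro s hs
      have h1 : min 1 z ≤ s := hs.1
      exact lt_of_lt_of_le (lt_min one_pos hz) h1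
    have hint : IntervalIntegrable (fun s : ℝ => μ s / s ^ 2) MeasureTheory.volume 1 z :=
      (hcg.mono hsub).intervalIntegrable
    have hmeas : StronglyMeasurableAtFilter (fun s : ℝ => μ s / s ^ 2) (nhds z) :=
      ⟨Ioi 0, Ioi_mem_nhds hz, hcg.aestronglyMeasurable measurableSet_Ioi⟩
    exact intervalIntegral.integral_hasDerivAt_right hint hmeas
      (hcg.continuousAt (Ioi_mem_nhds hz))
  -- derivative of μ
  have hμ' : ∀ z : ℝ, 0 < z → HasDerivAt μ (deriv μ z) z := by
    intro z hz
    exact ((hμ.differentiableOn one_ne_zero).differentiableAt (Ioi_mem_nhds hz)).hasDerivAt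
  -- derivative of μ / id
  have hH : ∀ z : ℝ, 0 < z →
      HasDerivAt (fun z' => μ z' / z') ((deriv μ z * z - μ z * 1) / z ^ 2) z := by
    intro z hz
    exact (hμ' z hz).div (hasDerivAt_id z) (ne_of_gt hz)
  intro t ht x
  have hrne : ∀ a b : ℝ, ρ a b ≠ 0 := fun a b => (hρpos a b).ne'
  -- derivative of φ ∘ ρ in x
  have hDφ : ∀ a b : ℝ, HasDerivAt (fun y => φ (ρ a y))
      (μ (ρ a b) / ρ a b ^ 2 * pdx ρ a b) b := fun a b =>
    HasDerivAt.comp b (hφ' _ (hρpos a b)) (hd_x ρ hρ a b)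
  -- rewrite ρ * v
  have heq1 : (fun s => ρ s x * v s x)
      = (fun s => ρ s x * u s x + μ (ρ s x) / ρ s x * pdx ρ s x) := by
    funext s
    have hvs : v s x = u s x + deriv (fun y => φ (ρ s y)) x := by rw [hv]
    rw [hvs, (hDφ s x).deriv]
    have h0 := hrne s x
    field_simp
  -- rewrite ρ * u * v
  have heq2 : (fun y => ρ t y * u t y * v t y)
      = (fun y => ρ t y * (u t y * u t y) + u t y * (μ (ρ t y) / ρ t y * pdx ρ t y)) := by
    funext y
    have hvs : v t y = u t y + deriv (fun y' => φ (ρ t y')) y := by rw [hv]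
    rw [hvs, (hDφ t y).deriv]
    have h0 := hrne t y
    field_simp
  -- E1: time derivative of ρ from continuity equation, at every point y
  have E1 : ∀ y : ℝ, pdt ρ t y = -(pdx ρ t y * u t y + ρ t y * pdx u t y) := by
    intro y
    have h := hcont t ht y
    have hmulx : HasDerivAt (fun y' => ρ t y' * u t y')
        (pdx ρ t y * u t y + ρ t y * pdx u t y) y :=
      (hd_x ρ hρ t y).mul (hd_x u hu t y)
    rw [(hd_t ρ hρ t y).deriv, hmulx.deriv] at h
    linarith
  -- E2: mixed derivative via Clairaut and the continuity equation
  have E2 : pdtx ρ t x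
      = -(pdxx ρ t x * u t x + 2 * pdx ρ t x * pdx u t x + ρ t x * pdxx u t x) := by
    have e2a : pdtx ρ t x = deriv (fun s => pdx ρ s x) t := ((hd_pdx_t ρ hρ t x).deriv).symm
    rw [e2a, clairaut' ρ hρ t x]
    have heqE : (fun y => pdt ρ t y)
        = (fun y => -(pdx ρ t y * u t y + ρ t y * pdx u t y)) := funext E1
    rw [heqE]
    have hneg : HasDerivAt (fun y => -(pdx ρ t y * u t y + ρ t y * pdx u t y))
        (-((pdxx ρ t x * u t x + pdx ρ t x * pdx u t x)
          + (pdx ρ t x * pdx u t x + ρ t x * pdxx u t x))) x :=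
      (((hd_pdx_x ρ hρ t x).mul (hd_x u hu t x)).add
        ((hd_x ρ hρ t x).mul (hd_pdx_x u hu t x))).neg
    rw [hneg.deriv]
    ring
  -- momentum equation with all derivatives computed
  have h3 := hmom t ht x
  have hfun : (fun y => ρ t y * u t y ^ 2) = (fun y => ρ t y * (u t y * u t y)) := by
    funext y; ring
  have hfun2 : (fun y => μ (ρ t y) * deriv (fun y' => u t y') y)
      = (fun y => μ (ρ t y) * pdx u t y) := by
    funext y; rw [(hd_x u hu t y).deriv]
  rw [hfun, hfun2] at h3
  have c1 : HasDerivAt (fun s => ρ s x * u s x)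
      (pdt ρ t x * u t x + ρ t x * pdt u t x) t :=
    (hd_t ρ hρ t x).mul (hd_t u hu t x)
  have d1 : HasDerivAt (fun y => ρ t y * (u t y * u t y))
      (pdx ρ t x * (u t x * u t x)
        + ρ t x * (pdx u t x * u t x + u t x * pdx u t x)) x :=
    (hd_x ρ hρ t x).mul ((hd_x u hu t x).mul (hd_x u hu t x))
  have hdμx : HasDerivAt (fun y => μ (ρ t y)) (deriv μ (ρ t x) * pdx ρ t x) x :=
    HasDerivAt.comp x (hμ' _ (hρpos t x)) (hd_x ρ hρ t x)
  have hTμ : HasDerivAt (fun y => μ (ρ t y) * pdx u t y)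
      (deriv μ (ρ t x) * pdx ρ t x * pdx u t x + μ (ρ t x) * pdxx u t x) x :=
    hdμx.mul (hd_pdx_x u hu t x)
  rw [c1.deriv, d1.deriv, hTμ.deriv] at h3
  -- compute the two main derivatives in the goal
  have hdHt : HasDerivAt (fun s => μ (ρ s x) / ρ s x)
      ((deriv μ (ρ t x) * ρ t x - μ (ρ t x) * 1) / ρ t x ^ 2 * pdt ρ t x) t :=
    HasDerivAt.comp t (hH _ (hρpos t x)) (hd_t ρ hρ t x)
  have hdHx : HasDerivAt (fun y => μ (ρ t y) / ρ t y)
      ((deriv μ (ρ t x) * ρ t x - μ (ρ t x) * 1) / ρ t x ^ 2 * pdx ρ t x) x :=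
    HasDerivAt.comp x (hH _ (hρpos t x)) (hd_x ρ hρ t x)
  have hbig : HasDerivAt (fun s => ρ s x * u s x + μ (ρ s x) / ρ s x * pdx ρ s x)
      ((pdt ρ t x * u t x + ρ t x * pdt u t x)
        + ((deriv μ (ρ t x) * ρ t x - μ (ρ t x) * 1) / ρ t x ^ 2 * pdt ρ t x * pdx ρ t x
          + μ (ρ t x) / ρ t x * pdtx ρ t x)) t :=
    c1.add (hdHt.mul (hd_pdx_t ρ hρ t x))
  have hbig2 : HasDerivAt
      (fun y => ρ t y * (u t y * u t y) + u t y * (μ (ρ t y) / ρ t y * pdx ρ t y))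
      ((pdx ρ t x * (u t x * u t x)
          + ρ t x * (pdx u t x * u t x + u t x * pdx u t x))
        + (pdx u t x * (μ (ρ t x) / ρ t x * pdx ρ t x)
          + u t x * ((deriv μ (ρ t x) * ρ t x - μ (ρ t x) * 1) / ρ t x ^ 2
              * pdx ρ t x * pdx ρ t x
            + μ (ρ t x) / ρ t x * pdxx ρ t x))) x :=
    d1.add ((hd_x u hu t x).mul (hdHx.mul (hd_pdx_x ρ hρ t x)))
  rw [heq1, heq2, hbig.deriv, hbig2.deriv]
  have hpx : deriv (fun y => p (ρ t y)) x
      = (deriv μ (ρ t x) * pdx ρ t x * pdx u t x + μ (ρ t x) * pdxx u t x)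
        - ((pdt ρ t x * u t x + ρ t x * pdt u t x)
          + (pdx ρ t x * (u t x * u t x)
            + ρ t x * (pdx u t x * u t x + u t x * pdx u t x))) := by
    linarith
  rw [hpx, E1 x, E2]
  have h0 := hrne t x
  field_simp
  ring
end

section
/- Under the hypotheses of the BD entropy identity, and assuming additionally p'(z) ≥ 0 for all z > 0, the effective velocity v = u + ∂ₓφ(ρ) satisfies pointwise ∂ₜ(ρv) + ∂ₓ(ρuv) + (p'(ρ)ρ²/μ(ρ))·v = (p'(ρ)ρ²/μ(ρ))·u. -/
open Set intervalIntegral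

noncomputable def pd1 (f : ℝ × ℝ → ℝ) (q : ℝ × ℝ) : ℝ := fderiv ℝ f q (1, 0)
noncomputable def pd2 (f : ℝ × ℝ → ℝ) (q : ℝ × ℝ) : ℝ := fderiv ℝ f q (0, 1)

theorem hasDerivAt_pd1 {f : ℝ × ℝ → ℝ} {t x : ℝ} (hf : DifferentiableAt ℝ f (t, x)) :
    HasDerivAt (fun s => f (s, x)) (pd1 f (t, x)) t := by
  have hl : HasDerivAt (fun s : ℝ => (s, x)) ((1:ℝ), (0:ℝ)) t :=
    (hasDerivAt_id t).prodMk (hasDerivAt_const t x)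
  exact hf.hasFDerivAt.comp_hasDerivAt t hl

theorem hasDerivAt_pd2 {f : ℝ × ℝ → ℝ} {t x : ℝ} (hf : DifferentiableAt ℝ f (t, x)) :
    HasDerivAt (fun y => f (t, y)) (pd2 f (t, x)) x := by
  have hl : HasDerivAt (fun y : ℝ => (t, y)) ((0:ℝ), (1:ℝ)) x :=
    (hasDerivAt_const x t).prodMk (hasDerivAt_id x)
  exact hf.hasFDerivAt.comp_hasDerivAt x hl

theorem contDiff_pd1 {f : ℝ × ℝ → ℝ} (hf : ContDiff ℝ 2 f) : ContDiff ℝ 1 (pd1 f) :=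
  (hf.fderiv_right (by norm_num)).clm_apply contDiff_const

theorem contDiff_pd2 {f : ℝ × ℝ → ℝ} (hf : ContDiff ℝ 2 f) : ContDiff ℝ 1 (pd2 f) :=
  (hf.fderiv_right (by norm_num)).clm_apply contDiff_const

theorem clairaut_s8 {f : ℝ × ℝ → ℝ} (hf : ContDiff ℝ 2 f) (q : ℝ × ℝ) :
    pd1 (pd2 f) q = pd2 (pd1 f) q := by
  have hdf : Differentiable ℝ f := hf.differentiable (by norm_num)
  have h1 : ContDiff ℝ 1 (fderiv ℝ f) := hf.fderiv_right (by norm_num)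
  have hdf' : DifferentiableAt ℝ (fderiv ℝ f) q :=
    (h1.differentiable (by norm_num)) q
  have hsym := second_derivative_symmetric (fun y => (hdf y).hasFDerivAt)
    hdf'.hasFDerivAt (0,1) (1,0)
  have e2 : ∀ w : ℝ × ℝ, fderiv ℝ (fun q' => fderiv ℝ f q' w) q
      = (fderiv ℝ (fderiv ℝ f) q).flip w := by
    intro w
    rw [fderiv_clm_apply hdf' (differentiableAt_const w)]
    simp
  have g1 : pd1 (pd2 f) q = fderiv ℝ (fun q' => fderiv ℝ f q' (0,1)) q (1,0) := rfl
  have g2 : pd2 (pd1 f) q = fderiv ℝ (fun q' => fderiv ℝ f q' (1,0)) q (0,1) := rfl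
  rw [g1, g2, e2, e2]
  simpa using hsym.symm

theorem hasDerivAt_phi (μ : ℝ → ℝ) (hμ : ContDiffOn ℝ 1 μ (Ioi 0)) {z : ℝ} (hz : 0 < z) :
    HasDerivAt (fun w => ∫ s in (1:ℝ)..w, μ s / s ^ 2) (μ z / z ^ 2) z := by
  set f : ℝ → ℝ := fun s => μ s / s ^ 2 with hf
  have hfc : ContinuousOn f (Ioi 0) := by
    apply hμ.continuousOn.div (by fun_prop)
    intro s hs
    have : (0:ℝ) < s := hs
    positivity
  have hsub : uIcc (1:ℝ) z ⊆ Ioi 0 := by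
    intro w hw
    rcases Set.mem_uIcc.mp hw with h | h
    · exact lt_of_lt_of_le one_pos h.1
    · exact lt_of_lt_of_le hz h.1
  have hint : IntervalIntegrable f MeasureTheory.volume 1 z :=
    (hfc.mono hsub).intervalIntegrable
  have hmeas : StronglyMeasurableAtFilter f (nhds z) MeasureTheory.volume :=
    ⟨Ioi 0, Ioi_mem_nhds hz, hfc.aestronglyMeasurable measurableSet_Ioi⟩
  exact intervalIntegral.integral_hasDerivAt_right hint hmeas
    (hfc.continuousAt (Ioi_mem_nhds hz))

theorem hasDerivAt_of_contDiffOn (p : ℝ → ℝ) (hp : ContDiffOn ℝ 1 p (Ioi 0)) {z : ℝ}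
    (hz : 0 < z) : HasDerivAt p (deriv p z) z :=
  ((hp.contDiffAt (Ioi_mem_nhds hz)).differentiableAt one_ne_zero).hasDerivAt

theorem Haspot_damping_identity
    (T : ℝ) (hT : 0 < T)
    (p μ : ℝ → ℝ)
    (hp : ContDiffOn ℝ 1 p (Ioi 0)) (hμ : ContDiffOn ℝ 1 μ (Ioi 0))
    (hμpos : ∀ z, 0 < z → 0 < μ z)
    (hp' : ∀ z, 0 < z → 0 ≤ deriv p z)
    (φ : ℝ → ℝ) (hφ : φ = fun z => ∫ s in (1:ℝ)..z, μ s / s ^ 2)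
    (ρ u : ℝ → ℝ → ℝ)
    (hρ : ContDiff ℝ 2 (fun q : ℝ × ℝ => ρ q.1 q.2))
    (hu : ContDiff ℝ 2 (fun q : ℝ × ℝ => u q.1 q.2))
    (hρpos : ∀ t x, 0 < ρ t x)
    (hcont : ∀ t ∈ Icc (0:ℝ) T, ∀ x : ℝ,
      deriv (fun s => ρ s x) t + deriv (fun y => ρ t y * u t y) x = 0)
    (hmom : ∀ t ∈ Icc (0:ℝ) T, ∀ x : ℝ,
      deriv (fun s => ρ s x * u s x) t + deriv (fun y => ρ t y * u t y ^ 2) x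
        = deriv (fun y => μ (ρ t y) * deriv (fun y' => u t y') y) x
          - deriv (fun y => p (ρ t y)) x)
    (v : ℝ → ℝ → ℝ)
    (hv : v = fun t x => u t x + deriv (fun y => φ (ρ t y)) x) :
    ∀ t ∈ Icc (0:ℝ) T, ∀ x : ℝ,
      deriv (fun s => ρ s x * v s x) t
        + deriv (fun y => ρ t y * u t y * v t y) x
        + (deriv p (ρ t x) * ρ t x ^ 2 / μ (ρ t x)) * v t x
        = (deriv p (ρ t x) * ρ t x ^ 2 / μ (ρ t x)) * u t x := by
  classical
  set F : ℝ × ℝ → ℝ := fun q => ρ q.1 q.2 with hF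
  set G : ℝ × ℝ → ℝ := fun q => u q.1 q.2 with hG
  have hFd : Differentiable ℝ F := hρ.differentiable two_ne_zero
  have hGd : Differentiable ℝ G := hu.differentiable two_ne_zero
  have hpd2F : ContDiff ℝ 1 (pd2 F) := contDiff_pd2 hρ
  have hpd1F : ContDiff ℝ 1 (pd1 F) := contDiff_pd1 hρ
  have hpd2G : ContDiff ℝ 1 (pd2 G) := contDiff_pd2 hu
  -- one-variable derivative facts in the space direction, at every point
  have hRy : ∀ s y : ℝ, HasDerivAt (fun y' => ρ s y') (pd2 F (s, y)) y :=
    fun s y => hasDerivAt_pd2 (hFd (s, y))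
  have hUy : ∀ s y : ℝ, HasDerivAt (fun y' => u s y') (pd2 G (s, y)) y :=
    fun s y => hasDerivAt_pd2 (hGd (s, y))
  -- formula for v
  have hvf : ∀ s y : ℝ, v s y
      = u s y + μ (ρ s y) / (ρ s y) ^ 2 * pd2 F (s, y) := by
    intro s y
    have hφ' : HasDerivAt φ (μ (ρ s y) / (ρ s y) ^ 2) (ρ s y) := by
      rw [hφ]; exact hasDerivAt_phi μ hμ (hρpos s y)
    have H : HasDerivAt (fun y' => φ (ρ s y'))
        (μ (ρ s y) / (ρ s y) ^ 2 * pd2 F (s, y)) y := hφ'.comp y (hRy s y)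
    rw [hv]
    show u s y + deriv (fun y' => φ (ρ s y')) y = _
    rw [H.deriv]
  intro t ht x
  have ha : 0 < ρ t x := hρpos t x
  have hane : ρ t x ≠ 0 := ha.ne'
  have hμa : μ (ρ t x) ≠ 0 := (hμpos _ ha).ne'
  -- named scalar partials
  set a := ρ t x with haa
  set b := u t x with hbb
  set Rx := pd2 F (t, x) with hRx
  set Rt := pd1 F (t, x) with hRt
  set Ux := pd2 G (t, x) with hUx
  set Ut := pd1 G (t, x) with hUt
  set Rxx := pd2 (pd2 F) (t, x) with hRxx
  set Rtx := pd2 (pd1 F) (t, x) with hRtx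
  set Uxx := pd2 (pd2 G) (t, x) with hUxx
  set mu' := deriv μ a with hmu'
  set p' := deriv p a with hp'a
  -- space direction HasDerivAt at (t, x)
  have hRy' : HasDerivAt (fun y => ρ t y) Rx x := hRy t x
  have hUy' : HasDerivAt (fun y => u t y) Ux x := hUy t x
  have hRxy : HasDerivAt (fun y => pd2 F (t, y)) Rxx x :=
    hasDerivAt_pd2 ((hpd2F.differentiable one_ne_zero) (t, x))
  have hRty : HasDerivAt (fun y => pd1 F (t, y)) Rtx x :=
    hasDerivAt_pd2 ((hpd1F.differentiable one_ne_zero) (t, x))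
  have hUxy : HasDerivAt (fun y => pd2 G (t, y)) Uxx x :=
    hasDerivAt_pd2 ((hpd2G.differentiable one_ne_zero) (t, x))
  have hμy : HasDerivAt (fun y => μ (ρ t y)) (mu' * Rx) x :=
    (hasDerivAt_of_contDiffOn μ hμ ha).comp x hRy'
  have hpy : HasDerivAt (fun y => p (ρ t y)) (p' * Rx) x :=
    (hasDerivAt_of_contDiffOn p hp ha).comp x hRy'
  -- time direction
  have hRt' : HasDerivAt (fun s => ρ s x) Rt t := hasDerivAt_pd1 (hFd (t, x))
  have hUt' : HasDerivAt (fun s => u s x) Ut t := hasDerivAt_pd1 (hGd (t, x))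
  have hRxt : HasDerivAt (fun s => pd2 F (s, x)) Rtx t := by
    have h := hasDerivAt_pd1 ((hpd2F.differentiable one_ne_zero) (t, x))
    rwa [clairaut_s8 hρ] at h
  have hμt : HasDerivAt (fun s => μ (ρ s x)) (mu' * Rt) t :=
    (hasDerivAt_of_contDiffOn μ hμ ha).comp t hRt'
  -- continuity equation pointwise in scalar form
  have hcsc : ∀ y : ℝ, pd1 F (t, y) + (pd2 F (t, y) * u t y + ρ t y * pd2 G (t, y)) = 0 := by
    intro y
    have h := hcont t ht y
    rw [(hasDerivAt_pd1 (hFd (t, y))).deriv] at h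
    erw [((hRy t y).mul (hUy t y)).deriv] at h
    exact h
  have rel1 : Rt = -(Rx * b + a * Ux) := by
    have := hcsc x
    linarith
  -- derivative of the continuity equation in space
  have rel2 : Rtx = -(Rxx * b + Rx * Ux + (Rx * Ux + a * Uxx)) := by
    have h2 : HasDerivAt (fun y => pd1 F (t, y))
        (-(Rxx * b + Rx * Ux + (Rx * Ux + a * Uxx))) x := by
      have h3 : (fun y => pd1 F (t, y))
          = fun y => -(pd2 F (t, y) * u t y + ρ t y * pd2 G (t, y)) := by
        funext y
        have := hcsc y
        linarith
      rw [h3]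
      have : HasDerivAt (fun y => -(pd2 F (t, y) * u t y + ρ t y * pd2 G (t, y))) _ x :=
        ((hRxy.mul hUy').add ((hRy'.mul hUxy))).neg
      convert this using 1
      try ring
    exact hRty.unique h2
  -- momentum equation in scalar form
  have rel3 : (Rt * b + a * Ut) + (Rx * b ^ 2 + a * (2 * b * Ux))
      = (mu' * Rx * Ux + μ a * Uxx) - p' * Rx := by
    have h := hmom t ht x
    erw [(hRt'.mul hUt').deriv] at h
    have e2 : deriv (fun y => ρ t y * u t y ^ 2) x = Rx * b ^ 2 + a * (2 * b * Ux) := by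
      have := (hRy'.mul (hUy'.pow 2)).deriv
      erw [this]
      simp only [Pi.pow_apply]
      try push_cast
      try ring
    rw [e2] at h
    have e3 : (fun y => μ (ρ t y) * deriv (fun y' => u t y') y)
        = fun y => μ (ρ t y) * pd2 G (t, y) := by
      funext y
      rw [(hUy t y).deriv]
    rw [e3] at h
    have e4 : deriv (fun y => μ (ρ t y) * pd2 G (t, y)) x = mu' * Rx * Ux + μ a * Uxx := by
      have := (hμy.mul hUxy).deriv
      erw [this]
      try ring
    rw [e4, hpy.deriv] at h
    exact h
  -- the two derivatives appearing in the goal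
  have e1 : deriv (fun s => ρ s x * v s x) t
      = (Rt * b + a * Ut)
        + ((mu' * Rt * a - μ a * Rt) / a ^ 2 * Rx + μ a / a * Rtx) := by
    have hfun : (fun s => ρ s x * v s x)
        = fun s => ρ s x * u s x + μ (ρ s x) / ρ s x * pd2 F (s, x) := by
      funext s
      rw [hvf s x]
      have h0 : ρ s x ≠ 0 := (hρpos s x).ne'
      field_simp
    rw [hfun]
    have h := (hRt'.mul hUt').add (((hμt.div hRt' hane)).mul hRxt)
    erw [h.deriv]
    simp only [Pi.mul_apply, Pi.div_apply, Pi.pow_apply]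
    try ring
  have e2g : deriv (fun y => ρ t y * u t y * v t y) x
      = (Rx * b ^ 2 + a * (2 * b * Ux))
        + ((Ux * (μ a / a) + b * ((mu' * Rx * a - μ a * Rx) / a ^ 2)) * Rx
            + b * (μ a / a) * Rxx) := by
    have hfun : (fun y => ρ t y * u t y * v t y)
        = fun y => ρ t y * u t y ^ 2 + u t y * (μ (ρ t y) / ρ t y) * pd2 F (t, y) := by
      funext y
      rw [hvf t y]
      have h0 : ρ t y ≠ 0 := (hρpos t y).ne'
      field_simp
    rw [hfun]
    have h := (hRy'.mul (hUy'.pow 2)).add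
      ((hUy'.mul (hμy.div hRy' hane)).mul hRxy)
    erw [h.deriv]
    simp only [Pi.mul_apply, Pi.div_apply, Pi.pow_apply]
    push_cast
    ring
  rw [e1, e2g, hvf t x, ← haa, ← hRx]
  rw [rel1] at rel3
  rw [rel1, rel2]
  field_simp
  linear_combination μ a * a ^ 2 * rel3
end

section
/- Let L > 0 and let ρ : [0,T] × ℝ → ℝ be a strictly positive C¹ function, L-periodic in x, and u : [0,T] × ℝ → ℝ a C¹ function, L-periodic in x, satisfying ∂ₜρ + ∂ₓ(ρu) = 0. Then for all t ∈ [0,T]: sup_x ρ(t,x) ≤ (sup_x ρ(0,x)) · exp(∫₀ᵗ ‖∂ₓu(s,·)‖_{L∞} ds) and inf_x ρ(t,x) ≥ (inf_x ρ(0,x)) · exp(−∫₀ᵗ ‖∂ₓu(s,·)‖_{L∞} ds). -/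
open Set Filter Topology

noncomputable def Dt (ρ : ℝ → ℝ → ℝ) (t x : ℝ) : ℝ :=
  fderiv ℝ (fun q : ℝ × ℝ => ρ q.1 q.2) (t, x) (1, 0)

noncomputable def Dx (ρ : ℝ → ℝ → ℝ) (t x : ℝ) : ℝ :=
  fderiv ℝ (fun q : ℝ × ℝ => ρ q.1 q.2) (t, x) (0, 1)

lemma hasDerivAt_Dt {ρ : ℝ → ℝ → ℝ} (hρ : ContDiff ℝ 1 (fun q : ℝ × ℝ => ρ q.1 q.2))
    (t x : ℝ) : HasDerivAt (fun s => ρ s x) (Dt ρ t x) t := by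
  have h1 : HasFDerivAt (fun q : ℝ × ℝ => ρ q.1 q.2)
      (fderiv ℝ (fun q : ℝ × ℝ => ρ q.1 q.2) (t, x)) (t, x) :=
    (hρ.differentiable one_ne_zero (t, x)).hasFDerivAt
  have h2 : HasDerivAt (fun s : ℝ => (s, x)) ((1 : ℝ), (0 : ℝ)) t :=
    (hasDerivAt_id t).prodMk (hasDerivAt_const t x)
  exact h1.comp_hasDerivAt t h2

lemma hasDerivAt_Dx {ρ : ℝ → ℝ → ℝ} (hρ : ContDiff ℝ 1 (fun q : ℝ × ℝ => ρ q.1 q.2))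
    (t x : ℝ) : HasDerivAt (fun y => ρ t y) (Dx ρ t x) x := by
  have h1 : HasFDerivAt (fun q : ℝ × ℝ => ρ q.1 q.2)
      (fderiv ℝ (fun q : ℝ × ℝ => ρ q.1 q.2) (t, x)) (t, x) :=
    (hρ.differentiable one_ne_zero (t, x)).hasFDerivAt
  have h2 : HasDerivAt (fun y : ℝ => (t, y)) ((0 : ℝ), (1 : ℝ)) x :=
    (hasDerivAt_const x t).prodMk (hasDerivAt_id x)
  exact h1.comp_hasDerivAt x h2

lemma continuous_Dt {ρ : ℝ → ℝ → ℝ} (hρ : ContDiff ℝ 1 (fun q : ℝ × ℝ => ρ q.1 q.2)) :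
    Continuous fun q : ℝ × ℝ => Dt ρ q.1 q.2 :=
  (hρ.continuous_fderiv one_ne_zero).clm_apply continuous_const

lemma continuous_Dx {ρ : ℝ → ℝ → ℝ} (hρ : ContDiff ℝ 1 (fun q : ℝ × ℝ => ρ q.1 q.2)) :
    Continuous fun q : ℝ × ℝ => Dx ρ q.1 q.2 :=
  (hρ.continuous_fderiv one_ne_zero).clm_apply continuous_const

lemma Dx_periodic {u : ℝ → ℝ → ℝ} (hu : ContDiff ℝ 1 (fun q : ℝ × ℝ => u q.1 q.2))
    {L : ℝ} (huper : ∀ t x, u t (x + L) = u t x) (s x : ℝ) :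
    Dx u s (x + L) = Dx u s x := by
  have h1 : HasDerivAt (fun y : ℝ => y + L) 1 x := (hasDerivAt_id x).add_const L
  have h2 : HasDerivAt (fun y => u s (y + L)) (Dx u s (x + L) * 1) x :=
    (hasDerivAt_Dx hu s (x + L)).comp x h1
  rw [mul_one] at h2
  have h3 : (fun y => u s (y + L)) = fun y => u s y := funext (huper s)
  rw [h3] at h2
  exact h2.unique (hasDerivAt_Dx hu s x)

lemma exists_max_of_periodic {g : ℝ → ℝ} {L : ℝ} (hL : 0 < L) (hg : Continuous g)
    (hper : ∀ x, g (x + L) = g x) : ∃ x₀ ∈ Icc (0:ℝ) L, ∀ x, g x ≤ g x₀ := by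
  obtain ⟨x₀, hx₀, hmax⟩ :=
    isCompact_Icc.exists_isMaxOn ⟨0, left_mem_Icc.2 hL.le⟩ hg.continuousOn
  refine ⟨x₀, hx₀, fun x => ?_⟩
  obtain ⟨y, hy, hxy⟩ := (Function.Periodic.exists_mem_Ico₀ hper hL x)
  rw [hxy]
  exact hmax (Ico_subset_Icc_self hy)

lemma exists_min_of_periodic {g : ℝ → ℝ} {L : ℝ} (hL : 0 < L) (hg : Continuous g)
    (hper : ∀ x, g (x + L) = g x) : ∃ x₀ ∈ Icc (0:ℝ) L, ∀ x, g x₀ ≤ g x := by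
  obtain ⟨x₀, hx₀, hmax⟩ := exists_max_of_periodic hL hg.neg (fun x => by simp [hper x])
  exact ⟨x₀, hx₀, fun x => by have := hmax x; simpa using this⟩

lemma iSup_eq_of_max {g : ℝ → ℝ} {x₀ : ℝ} (h : ∀ x, g x ≤ g x₀) : (⨆ x, g x) = g x₀ :=
  le_antisymm (ciSup_le h) (le_ciSup ⟨g x₀, by rintro y ⟨x, rfl⟩; exact h x⟩ x₀)

lemma iInf_eq_of_min {g : ℝ → ℝ} {x₀ : ℝ} (h : ∀ x, g x₀ ≤ g x) : (⨅ x, g x) = g x₀ :=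
  le_antisymm (ciInf_le ⟨g x₀, by rintro y ⟨x, rfl⟩; exact h x⟩ x₀) (le_ciInf h)

lemma sSup_image_eq_of_max {g : ℝ → ℝ} {L x₀ : ℝ} (hx₀ : x₀ ∈ Icc (0:ℝ) L)
    (h : ∀ x, g x ≤ g x₀) : sSup (g '' Icc (0:ℝ) L) = g x₀ :=
  IsGreatest.csSup_eq ⟨mem_image_of_mem _ hx₀, by rintro y ⟨x, _, rfl⟩; exact h x⟩

lemma sInf_image_eq_of_min {g : ℝ → ℝ} {L x₀ : ℝ} (hx₀ : x₀ ∈ Icc (0:ℝ) L)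
    (h : ∀ x, g x₀ ≤ g x) : sInf (g '' Icc (0:ℝ) L) = g x₀ :=
  IsLeast.csInf_eq ⟨mem_image_of_mem _ hx₀, by rintro y ⟨x, _, rfl⟩; exact h x⟩

noncomputable def Msup (ρ : ℝ → ℝ → ℝ) (t : ℝ) : ℝ := ⨆ x, ρ t x
noncomputable def mInf (ρ : ℝ → ℝ → ℝ) (t : ℝ) : ℝ := ⨅ x, ρ t x
noncomputable def KK (u : ℝ → ℝ → ℝ) (s : ℝ) : ℝ := ⨆ x, |Dx u s x|

section main

variable {L T : ℝ} {ρ u : ℝ → ℝ → ℝ}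

lemma sup_bound (hL : 0 < L)
    (hρ : ContDiff ℝ 1 (fun q : ℝ × ℝ => ρ q.1 q.2))
    (hu : ContDiff ℝ 1 (fun q : ℝ × ℝ => u q.1 q.2))
    (hρpos : ∀ t x, 0 < ρ t x)
    (hρper : ∀ t x, ρ t (x + L) = ρ t x)
    (huper : ∀ t x, u t (x + L) = u t x)
    (hcont : ∀ t ∈ Icc (0:ℝ) T, ∀ x : ℝ,
      deriv (fun s => ρ s x) t + deriv (fun y => ρ t y * u t y) x = 0) :
    ∀ t ∈ Icc (0:ℝ) T, Msup ρ t ≤ Msup ρ 0 * Real.exp (∫ s in (0:ℝ)..t, KK u s) := by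
  have hFc : Continuous (fun q : ℝ × ℝ => ρ q.1 q.2) := hρ.continuous
  have hρxc : ∀ t, Continuous (fun x => ρ t x) := fun t => hFc.comp (Continuous.prodMk_right t)
  have hDuc : Continuous (fun q : ℝ × ℝ => Dx u q.1 q.2) := continuous_Dx hu
  have hDuxc : ∀ s, Continuous (fun x => |Dx u s x|) :=
    fun s => (hDuc.comp (Continuous.prodMk_right s)).abs
  have hDuper : ∀ s x, Dx u s (x + L) = Dx u s x := Dx_periodic hu huper
  have hKmax : ∀ s, ∃ x₀ ∈ Icc (0:ℝ) L, ∀ x, |Dx u s x| ≤ |Dx u s x₀| :=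
    fun s => exists_max_of_periodic hL (hDuxc s) (fun x => by rw [hDuper s x])
  have hKabs : ∀ s x, |Dx u s x| ≤ KK u s := by
    intro s x
    obtain ⟨x₀, _, h⟩ := hKmax s
    calc |Dx u s x| ≤ |Dx u s x₀| := h x
    _ = KK u s := (iSup_eq_of_max h).symm
  have hK0 : ∀ s, 0 ≤ KK u s := fun s => (abs_nonneg _).trans (hKabs s 0)
  have hKcont : Continuous (KK u) := by
    have he : KK u = fun s => sSup ((fun x => |Dx u s x|) '' Icc (0:ℝ) L) := by
      funext s
      obtain ⟨x₀, hx₀, h⟩ := hKmax s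
      rw [show KK u s = |Dx u s x₀| from iSup_eq_of_max h, sSup_image_eq_of_max hx₀ h]
    rw [he]
    exact isCompact_Icc.continuous_sSup (continuous_Dx hu).abs
  have hMmax : ∀ t, ∃ x₀ ∈ Icc (0:ℝ) L, (∀ x, ρ t x ≤ ρ t x₀) ∧ Msup ρ t = ρ t x₀ := by
    intro t
    obtain ⟨x₀, hx₀, h⟩ := exists_max_of_periodic hL (hρxc t) (hρper t)
    exact ⟨x₀, hx₀, h, iSup_eq_of_max h⟩
  have hMle : ∀ t x, ρ t x ≤ Msup ρ t := by
    intro t x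
    obtain ⟨x₀, _, h, he⟩ := hMmax t
    rw [he]; exact h x
  have hMpos : ∀ t, 0 < Msup ρ t := fun t => (hρpos t 0).trans_le (hMle t 0)
  have hMcont : Continuous (Msup ρ) := by
    have he : Msup ρ = fun t => sSup ((fun x => ρ t x) '' Icc (0:ℝ) L) := by
      funext t
      obtain ⟨x₀, hx₀, h, heq⟩ := hMmax t
      rw [heq, sSup_image_eq_of_max hx₀ h]
    rw [he]
    exact isCompact_Icc.continuous_sSup hFc
  have hPDE : ∀ t ∈ Icc (0:ℝ) T, ∀ x, Dt ρ t x = -(Dx ρ t x * u t x + ρ t x * Dx u t x) := by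
    intro t ht x
    have h1 := hcont t ht x
    rw [(hasDerivAt_Dt hρ t x).deriv,
      (show HasDerivAt (fun y => ρ t y * u t y) (Dx ρ t x * u t x + ρ t x * Dx u t x) x from
        (hasDerivAt_Dx hρ t x).mul (hasDerivAt_Dx hu t x)).deriv] at h1
    linarith
  -- the key slope estimate
  have hslope_sup : ∀ τ ∈ Ico (0:ℝ) T, ∀ r, KK u τ * Msup ρ τ < r →
      ∀ᶠ z in 𝓝[>] τ, slope (Msup ρ) τ z < r := by
    intro τ hτ r hr
    by_contra hcontra
    rw [Filter.not_eventually] at hcontra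
    simp only [not_lt] at hcontra
    have hseq : ∀ n : ℕ, ∃ z, z ∈ Ioo τ (τ + 1 / (n + 1)) ∧ r ≤ slope (Msup ρ) τ z := by
      intro n
      have hpos : (0:ℝ) < 1 / (n + 1) := by positivity
      have hmem : Ioo τ (τ + 1 / (n + 1)) ∈ 𝓝[>] τ :=
        Ioo_mem_nhdsGT_of_mem ⟨le_refl τ, by linarith⟩
      exact frequently_iff.mp hcontra hmem
    choose z hz hrz using hseq
    have hzgt : ∀ n, τ < z n := fun n => (hz n).1
    have hzt : Tendsto z atTop (𝓝 τ) := by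
      have h2 : Tendsto (fun n : ℕ => τ + 1 / (n + 1 : ℝ)) atTop (𝓝 τ) := by
        have := tendsto_one_div_add_atTop_nhds_zero_nat (𝕜 := ℝ)
        simpa using tendsto_const_nhds.add this
      exact tendsto_of_tendsto_of_tendsto_of_le_of_le tendsto_const_nhds h2
        (fun n => (hzgt n).le) (fun n => (hz n).2.le)
    choose x hxmem hxmax hxM using fun n => hMmax (z n)
    have hMVT : ∀ n, ∃ ξ ∈ Ioo τ (z n),
        Dt ρ ξ (x n) = (ρ (z n) (x n) - ρ τ (x n)) / (z n - τ) := by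
      intro n
      have hc : ContinuousOn (fun s => ρ s (x n)) (Icc τ (z n)) :=
        (hFc.comp (continuous_id.prodMk continuous_const)).continuousOn
      have hd : DifferentiableOn ℝ (fun s => ρ s (x n)) (Ioo τ (z n)) :=
        fun s _ => (hasDerivAt_Dt hρ s (x n)).differentiableAt.differentiableWithinAt
      obtain ⟨ξ, hξ, hderiv⟩ := exists_deriv_eq_slope (fun s => ρ s (x n)) (hzgt n) hc hd
      refine ⟨ξ, hξ, ?_⟩
      rw [← (hasDerivAt_Dt hρ ξ (x n)).deriv]
      exact hderiv
    choose ξ hξ hξd using hMVT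
    have hr' : ∀ n, r ≤ Dt ρ (ξ n) (x n) := by
      intro n
      have h1 : r ≤ (Msup ρ (z n) - Msup ρ τ) / (z n - τ) := by
        have := hrz n
        rwa [slope_def_field] at this
      have hnum : Msup ρ (z n) - Msup ρ τ ≤ ρ (z n) (x n) - ρ τ (x n) := by
        rw [hxM n]
        have := hMle τ (x n)
        linarith
      have h2 : (Msup ρ (z n) - Msup ρ τ) / (z n - τ)
          ≤ (ρ (z n) (x n) - ρ τ (x n)) / (z n - τ) := by
        gcongr
        exact sub_nonneg.2 (hzgt n).le
      calc r ≤ _ := h1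
      _ ≤ _ := h2
      _ = Dt ρ (ξ n) (x n) := (hξd n).symm
    obtain ⟨xs, hxs, φ, hφ, hxconv⟩ := isCompact_Icc.tendsto_subseq hxmem
    have hzφ : Tendsto (z ∘ φ) atTop (𝓝 τ) := hzt.comp hφ.tendsto_atTop
    have hξτ : Tendsto (fun n => ξ (φ n)) atTop (𝓝 τ) :=
      tendsto_of_tendsto_of_tendsto_of_le_of_le tendsto_const_nhds hzφ
        (fun n => (hξ (φ n)).1.le) (fun n => (hξ (φ n)).2.le)
    have hpair : Tendsto (fun n => (ξ (φ n), x (φ n))) atTop (𝓝 (τ, xs)) :=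
      hξτ.prodMk_nhds hxconv
    have hrlim : r ≤ Dt ρ τ xs :=
      ge_of_tendsto (((continuous_Dt hρ).tendsto (τ, xs)).comp hpair)
        (Filter.Eventually.of_forall fun n => hr' (φ n))
    have hρlim : Tendsto (fun n => ρ (z (φ n)) (x (φ n))) atTop (𝓝 (ρ τ xs)) :=
      (hFc.tendsto (τ, xs)).comp (hzφ.prodMk_nhds hxconv)
    have hMlim : Tendsto (fun n => ρ (z (φ n)) (x (φ n))) atTop (𝓝 (Msup ρ τ)) := by
      have h1 : Tendsto (fun n => Msup ρ (z (φ n))) atTop (𝓝 (Msup ρ τ)) :=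
        (hMcont.tendsto τ).comp hzφ
      have h2 : (fun n => Msup ρ (z (φ n))) = fun n => ρ (z (φ n)) (x (φ n)) :=
        funext fun n => hxM (φ n)
      rwa [h2] at h1
    have hMxs : ρ τ xs = Msup ρ τ := tendsto_nhds_unique hρlim hMlim
    have hxsmax : ∀ y, ρ τ y ≤ ρ τ xs := fun y => (hMle τ y).trans_eq hMxs.symm
    have hDx0 : Dx ρ τ xs = 0 := by
      have hlm : IsLocalMax (fun y => ρ τ y) xs := Filter.Eventually.of_forall hxsmax
      have h := hlm.deriv_eq_zero
      rwa [(hasDerivAt_Dx hρ τ xs).deriv] at h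
    have hτIcc : τ ∈ Icc (0:ℝ) T := ⟨hτ.1, hτ.2.le⟩
    have hDtval : Dt ρ τ xs = -(ρ τ xs * Dx u τ xs) := by
      have h := hPDE τ hτIcc xs
      rw [hDx0] at h
      linarith [h]
    have hfinal : Dt ρ τ xs ≤ KK u τ * Msup ρ τ := by
      have h1 : -(Dx u τ xs) ≤ |Dx u τ xs| := neg_le_abs _
      have h2 := hKabs τ xs
      calc Dt ρ τ xs = ρ τ xs * (-(Dx u τ xs)) := by rw [hDtval]; ring
      _ ≤ ρ τ xs * |Dx u τ xs| := mul_le_mul_of_nonneg_left h1 (hρpos τ xs).le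
      _ ≤ ρ τ xs * KK u τ := mul_le_mul_of_nonneg_left h2 (hρpos τ xs).le
      _ = KK u τ * Msup ρ τ := by rw [hMxs]; ring
    linarith
  -- fencing with ε
  have hsup_eps : ∀ ε, 0 < ε → ∀ t ∈ Icc (0:ℝ) T,
      Msup ρ t ≤ Msup ρ 0 * Real.exp ((∫ s in (0:ℝ)..t, KK u s) + ε * t) := by
    intro ε hε
    have hB : ∀ τ : ℝ, HasDerivAt
        (fun τ => Msup ρ 0 * Real.exp ((∫ s in (0:ℝ)..τ, KK u s) + ε * τ))
        (Msup ρ 0 * (Real.exp ((∫ s in (0:ℝ)..τ, KK u s) + ε * τ) * (KK u τ + ε))) τ := by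
      intro τ
      have hI : HasDerivAt (fun τ => ∫ s in (0:ℝ)..τ, KK u s) (KK u τ) τ :=
        (hKcont.integral_hasStrictDerivAt 0 τ).hasDerivAt
      have h2 : HasDerivAt (fun τ => (∫ s in (0:ℝ)..τ, KK u s) + ε * τ) (KK u τ + ε) τ := by
        have h := hI.add ((hasDerivAt_id τ).const_mul ε)
        rw [mul_one] at h
        exact h
      exact h2.exp.const_mul (Msup ρ 0)
    intro t ht
    refine image_le_of_liminf_slope_right_lt_deriv_boundary (f := Msup ρ)
      (f' := fun τ => KK u τ * Msup ρ τ) (a := 0) (b := T)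
      hMcont.continuousOn
      (fun τ hτ r hr => (hslope_sup τ hτ r hr).frequently)
      (by simp) hB ?_ ht
    intro τ hτ hcontact
    have hMτ := hMpos τ
    calc KK u τ * Msup ρ τ < (KK u τ + ε) * Msup ρ τ := by nlinarith
    _ = Msup ρ 0 * (Real.exp ((∫ s in (0:ℝ)..τ, KK u s) + ε * τ) * (KK u τ + ε)) := by
      rw [hcontact]; ring
  intro t ht
  have htend : Tendsto (fun ε : ℝ => Msup ρ 0 * Real.exp ((∫ s in (0:ℝ)..t, KK u s) + ε * t))
      (𝓝[>] 0) (𝓝 (Msup ρ 0 * Real.exp (∫ s in (0:ℝ)..t, KK u s))) := by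
    have hc : Continuous fun ε : ℝ =>
        Msup ρ 0 * Real.exp ((∫ s in (0:ℝ)..t, KK u s) + ε * t) := by
      exact continuous_const.mul ((continuous_const.add (continuous_id.mul continuous_const)).rexp)
    have h : Tendsto (fun ε : ℝ => Msup ρ 0 * Real.exp ((∫ s in (0:ℝ)..t, KK u s) + ε * t))
        (𝓝[>] (0:ℝ)) (𝓝 (Msup ρ 0 * Real.exp ((∫ s in (0:ℝ)..t, KK u s) + 0 * t))) :=
      (hc.tendsto 0).mono_left nhdsWithin_le_nhds
    simpa using h
  exact ge_of_tendsto htend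
    (eventually_nhdsWithin_of_forall fun ε hε => hsup_eps ε hε t ht)

end main
section main2

variable {L T : ℝ} {ρ u : ℝ → ℝ → ℝ}

lemma inf_bound (hL : 0 < L)
    (hρ : ContDiff ℝ 1 (fun q : ℝ × ℝ => ρ q.1 q.2))
    (hu : ContDiff ℝ 1 (fun q : ℝ × ℝ => u q.1 q.2))
    (hρpos : ∀ t x, 0 < ρ t x)
    (hρper : ∀ t x, ρ t (x + L) = ρ t x)
    (huper : ∀ t x, u t (x + L) = u t x)
    (hcont : ∀ t ∈ Icc (0:ℝ) T, ∀ x : ℝ,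
      deriv (fun s => ρ s x) t + deriv (fun y => ρ t y * u t y) x = 0) :
    ∀ t ∈ Icc (0:ℝ) T,
      mInf ρ 0 * Real.exp (-∫ s in (0:ℝ)..t, KK u s) ≤ mInf ρ t := by
  have hFc : Continuous (fun q : ℝ × ℝ => ρ q.1 q.2) := hρ.continuous
  have hρxc : ∀ t, Continuous (fun x => ρ t x) := fun t => hFc.comp (Continuous.prodMk_right t)
  have hDuc : Continuous (fun q : ℝ × ℝ => Dx u q.1 q.2) := continuous_Dx hu
  have hDuxc : ∀ s, Continuous (fun x => |Dx u s x|) :=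
    fun s => (hDuc.comp (Continuous.prodMk_right s)).abs
  have hDuper : ∀ s x, Dx u s (x + L) = Dx u s x := Dx_periodic hu huper
  have hKmax : ∀ s, ∃ x₀ ∈ Icc (0:ℝ) L, ∀ x, |Dx u s x| ≤ |Dx u s x₀| :=
    fun s => exists_max_of_periodic hL (hDuxc s) (fun x => by rw [hDuper s x])
  have hKabs : ∀ s x, |Dx u s x| ≤ KK u s := by
    intro s x
    obtain ⟨x₀, _, h⟩ := hKmax s
    calc |Dx u s x| ≤ |Dx u s x₀| := h x
    _ = KK u s := (iSup_eq_of_max h).symm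
  have hKcont : Continuous (KK u) := by
    have he : KK u = fun s => sSup ((fun x => |Dx u s x|) '' Icc (0:ℝ) L) := by
      funext s
      obtain ⟨x₀, hx₀, h⟩ := hKmax s
      rw [show KK u s = |Dx u s x₀| from iSup_eq_of_max h, sSup_image_eq_of_max hx₀ h]
    rw [he]
    exact isCompact_Icc.continuous_sSup (continuous_Dx hu).abs
  have hmmin : ∀ t, ∃ x₀ ∈ Icc (0:ℝ) L, (∀ x, ρ t x₀ ≤ ρ t x) ∧ mInf ρ t = ρ t x₀ := by
    intro t
    obtain ⟨x₀, hx₀, h⟩ := exists_min_of_periodic hL (hρxc t) (hρper t)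
    exact ⟨x₀, hx₀, h, iInf_eq_of_min h⟩
  have hmle : ∀ t x, mInf ρ t ≤ ρ t x := by
    intro t x
    obtain ⟨x₀, _, h, he⟩ := hmmin t
    rw [he]; exact h x
  have hmpos : ∀ t, 0 < mInf ρ t := by
    intro t
    obtain ⟨x₀, _, _, he⟩ := hmmin t
    rw [he]; exact hρpos t x₀
  have hmcont : Continuous (mInf ρ) := by
    have he : mInf ρ = fun t => sInf ((fun x => ρ t x) '' Icc (0:ℝ) L) := by
      funext t
      obtain ⟨x₀, hx₀, h, heq⟩ := hmmin t
      rw [heq, sInf_image_eq_of_min hx₀ h]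
    rw [he]
    exact isCompact_Icc.continuous_sInf hFc
  have hPDE : ∀ t ∈ Icc (0:ℝ) T, ∀ x, Dt ρ t x = -(Dx ρ t x * u t x + ρ t x * Dx u t x) := by
    intro t ht x
    have h1 := hcont t ht x
    rw [(hasDerivAt_Dt hρ t x).deriv,
      (show HasDerivAt (fun y => ρ t y * u t y) (Dx ρ t x * u t x + ρ t x * Dx u t x) x from
        (hasDerivAt_Dx hρ t x).mul (hasDerivAt_Dx hu t x)).deriv] at h1
    linarith
  -- key slope estimate for -mInf
  have hslope_inf : ∀ τ ∈ Ico (0:ℝ) T, ∀ r, KK u τ * mInf ρ τ < r →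
      ∀ᶠ z in 𝓝[>] τ, slope (fun t => -(mInf ρ t)) τ z < r := by
    intro τ hτ r hr
    by_contra hcontra
    rw [Filter.not_eventually] at hcontra
    simp only [not_lt] at hcontra
    have hseq : ∀ n : ℕ, ∃ z, z ∈ Ioo τ (τ + 1 / (n + 1)) ∧
        r ≤ slope (fun t => -(mInf ρ t)) τ z := by
      intro n
      have hpos : (0:ℝ) < 1 / (n + 1) := by positivity
      have hmem : Ioo τ (τ + 1 / (n + 1)) ∈ 𝓝[>] τ :=
        Ioo_mem_nhdsGT_of_mem ⟨le_refl τ, by linarith⟩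
      exact frequently_iff.mp hcontra hmem
    choose z hz hrz using hseq
    have hzgt : ∀ n, τ < z n := fun n => (hz n).1
    have hzt : Tendsto z atTop (𝓝 τ) := by
      have h2 : Tendsto (fun n : ℕ => τ + 1 / (n + 1 : ℝ)) atTop (𝓝 τ) := by
        have := tendsto_one_div_add_atTop_nhds_zero_nat (𝕜 := ℝ)
        simpa using tendsto_const_nhds.add this
      exact tendsto_of_tendsto_of_tendsto_of_le_of_le tendsto_const_nhds h2
        (fun n => (hzgt n).le) (fun n => (hz n).2.le)
    choose x hxmem hxmin hxm using fun n => hmmin (z n)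
    have hMVT : ∀ n, ∃ ξ ∈ Ioo τ (z n),
        Dt ρ ξ (x n) = (ρ (z n) (x n) - ρ τ (x n)) / (z n - τ) := by
      intro n
      have hc : ContinuousOn (fun s => ρ s (x n)) (Icc τ (z n)) :=
        (hFc.comp (continuous_id.prodMk continuous_const)).continuousOn
      have hd : DifferentiableOn ℝ (fun s => ρ s (x n)) (Ioo τ (z n)) :=
        fun s _ => (hasDerivAt_Dt hρ s (x n)).differentiableAt.differentiableWithinAt
      obtain ⟨ξ, hξ, hderiv⟩ := exists_deriv_eq_slope (fun s => ρ s (x n)) (hzgt n) hc hd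
      refine ⟨ξ, hξ, ?_⟩
      rw [← (hasDerivAt_Dt hρ ξ (x n)).deriv]
      exact hderiv
    choose ξ hξ hξd using hMVT
    have hr' : ∀ n, r ≤ -(Dt ρ (ξ n) (x n)) := by
      intro n
      have h1 : r ≤ (-(mInf ρ (z n)) - -(mInf ρ τ)) / (z n - τ) := by
        have := hrz n
        rwa [slope_def_field] at this
      have hnum : -(mInf ρ (z n)) - -(mInf ρ τ) ≤ -(ρ (z n) (x n) - ρ τ (x n)) := by
        rw [hxm n]
        have := hmle τ (x n)
        linarith
      have h2 : (-(mInf ρ (z n)) - -(mInf ρ τ)) / (z n - τ)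
          ≤ (-(ρ (z n) (x n) - ρ τ (x n))) / (z n - τ) := by
        gcongr
        exact sub_nonneg.2 (hzgt n).le
      have h3 : (-(ρ (z n) (x n) - ρ τ (x n))) / (z n - τ) = -(Dt ρ (ξ n) (x n)) := by
        rw [hξd n]; ring
      calc r ≤ _ := h1
      _ ≤ _ := h2
      _ = _ := h3
    obtain ⟨xs, hxs, φ, hφ, hxconv⟩ := isCompact_Icc.tendsto_subseq hxmem
    have hzφ : Tendsto (z ∘ φ) atTop (𝓝 τ) := hzt.comp hφ.tendsto_atTop
    have hξτ : Tendsto (fun n => ξ (φ n)) atTop (𝓝 τ) :=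
      tendsto_of_tendsto_of_tendsto_of_le_of_le tendsto_const_nhds hzφ
        (fun n => (hξ (φ n)).1.le) (fun n => (hξ (φ n)).2.le)
    have hpair : Tendsto (fun n => (ξ (φ n), x (φ n))) atTop (𝓝 (τ, xs)) :=
      hξτ.prodMk_nhds hxconv
    have hrlim : r ≤ -(Dt ρ τ xs) :=
      ge_of_tendsto ((((continuous_Dt hρ).tendsto (τ, xs)).comp hpair).neg)
        (Filter.Eventually.of_forall fun n => hr' (φ n))
    have hρlim : Tendsto (fun n => ρ (z (φ n)) (x (φ n))) atTop (𝓝 (ρ τ xs)) :=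
      (hFc.tendsto (τ, xs)).comp (hzφ.prodMk_nhds hxconv)
    have hmlim : Tendsto (fun n => ρ (z (φ n)) (x (φ n))) atTop (𝓝 (mInf ρ τ)) := by
      have h1 : Tendsto (fun n => mInf ρ (z (φ n))) atTop (𝓝 (mInf ρ τ)) :=
        (hmcont.tendsto τ).comp hzφ
      have h2 : (fun n => mInf ρ (z (φ n))) = fun n => ρ (z (φ n)) (x (φ n)) :=
        funext fun n => hxm (φ n)
      rwa [h2] at h1
    have hmxs : ρ τ xs = mInf ρ τ := tendsto_nhds_unique hρlim hmlim
    have hxsmin : ∀ y, ρ τ xs ≤ ρ τ y := fun y => hmxs.le.trans (hmle τ y)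
    have hDx0 : Dx ρ τ xs = 0 := by
      have hlm : IsLocalMin (fun y => ρ τ y) xs := Filter.Eventually.of_forall hxsmin
      have h := hlm.deriv_eq_zero
      rwa [(hasDerivAt_Dx hρ τ xs).deriv] at h
    have hτIcc : τ ∈ Icc (0:ℝ) T := ⟨hτ.1, hτ.2.le⟩
    have hDtval : Dt ρ τ xs = -(ρ τ xs * Dx u τ xs) := by
      have h := hPDE τ hτIcc xs
      rw [hDx0] at h
      linarith [h]
    have hfinal : -(Dt ρ τ xs) ≤ KK u τ * mInf ρ τ := by
      have h1 : Dx u τ xs ≤ |Dx u τ xs| := le_abs_self _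
      have h2 := hKabs τ xs
      calc -(Dt ρ τ xs) = ρ τ xs * Dx u τ xs := by rw [hDtval]; ring
      _ ≤ ρ τ xs * |Dx u τ xs| := mul_le_mul_of_nonneg_left h1 (hρpos τ xs).le
      _ ≤ ρ τ xs * KK u τ := mul_le_mul_of_nonneg_left h2 (hρpos τ xs).le
      _ = KK u τ * mInf ρ τ := by rw [hmxs]; ring
    linarith
  -- fencing with ε
  have hinf_eps : ∀ ε, 0 < ε → ∀ t ∈ Icc (0:ℝ) T,
      mInf ρ 0 * Real.exp (-(∫ s in (0:ℝ)..t, KK u s) - ε * t) ≤ mInf ρ t := by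
    intro ε hε
    have hB : ∀ τ : ℝ, HasDerivAt
        (fun τ => -(mInf ρ 0 * Real.exp (-(∫ s in (0:ℝ)..τ, KK u s) - ε * τ)))
        (mInf ρ 0 * (Real.exp (-(∫ s in (0:ℝ)..τ, KK u s) - ε * τ) * (KK u τ + ε))) τ := by
      intro τ
      have hI : HasDerivAt (fun τ => ∫ s in (0:ℝ)..τ, KK u s) (KK u τ) τ :=
        (hKcont.integral_hasStrictDerivAt 0 τ).hasDerivAt
      have h2 : HasDerivAt (fun τ => -(∫ s in (0:ℝ)..τ, KK u s) - ε * τ)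
          (-(KK u τ) - ε) τ := by
        have h := hI.neg.sub ((hasDerivAt_id τ).const_mul ε)
        rw [mul_one] at h
        exact h
      have h3 : HasDerivAt (fun τ => -(mInf ρ 0 * Real.exp (-(∫ s in (0:ℝ)..τ, KK u s) - ε * τ))) _ τ :=
        (h2.exp.const_mul (mInf ρ 0)).neg
      convert h3 using 1
      ring
    intro t ht
    have key := image_le_of_liminf_slope_right_lt_deriv_boundary
      (f := fun t => -(mInf ρ t)) (f' := fun τ => KK u τ * mInf ρ τ) (a := 0) (b := T)
      hmcont.neg.continuousOn
      (fun τ hτ r hr => (hslope_inf τ hτ r hr).frequently)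
      (by simp) hB ?_ ht
    · have key' : -(mInf ρ t) ≤
          -(mInf ρ 0 * Real.exp (-(∫ s in (0:ℝ)..t, KK u s) - ε * t)) := key
      linarith
    · intro τ hτ hcontact
      have hmτ := hmpos τ
      have hmeq : mInf ρ τ = mInf ρ 0 * Real.exp (-(∫ s in (0:ℝ)..τ, KK u s) - ε * τ) := by
        have := hcontact
        simpa [neg_inj] using this
      calc KK u τ * mInf ρ τ < (KK u τ + ε) * mInf ρ τ := by nlinarith
      _ = mInf ρ 0 * (Real.exp (-(∫ s in (0:ℝ)..τ, KK u s) - ε * τ) * (KK u τ + ε)) := by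
        rw [hmeq]; ring
  intro t ht
  have htend : Tendsto
      (fun ε : ℝ => mInf ρ 0 * Real.exp (-(∫ s in (0:ℝ)..t, KK u s) - ε * t))
      (𝓝[>] 0) (𝓝 (mInf ρ 0 * Real.exp (-(∫ s in (0:ℝ)..t, KK u s)))) := by
    have hc : Continuous fun ε : ℝ =>
        mInf ρ 0 * Real.exp (-(∫ s in (0:ℝ)..t, KK u s) - ε * t) :=
      continuous_const.mul ((continuous_const.sub (continuous_id.mul continuous_const)).rexp)
    have h : Tendsto (fun ε : ℝ => mInf ρ 0 * Real.exp (-(∫ s in (0:ℝ)..t, KK u s) - ε * t))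
        (𝓝[>] (0:ℝ)) (𝓝 (mInf ρ 0 * Real.exp (-(∫ s in (0:ℝ)..t, KK u s) - 0 * t))) :=
      (hc.tendsto 0).mono_left nhdsWithin_le_nhds
    simpa using h
  exact le_of_tendsto htend
    (eventually_nhdsWithin_of_forall fun ε hε => hinf_eps ε hε t ht)

end main2

theorem density_sup_inf_bounds
    (L T : ℝ) (hL : 0 < L) (hT : 0 < T)
    (ρ u : ℝ → ℝ → ℝ)
    (hρ : ContDiff ℝ 1 (fun q : ℝ × ℝ => ρ q.1 q.2))
    (hu : ContDiff ℝ 1 (fun q : ℝ × ℝ => u q.1 q.2))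
    (hρpos : ∀ t x, 0 < ρ t x)
    (hρper : ∀ t x, ρ t (x + L) = ρ t x)
    (huper : ∀ t x, u t (x + L) = u t x)
    (hcont : ∀ t ∈ Icc (0:ℝ) T, ∀ x : ℝ,
      deriv (fun s => ρ s x) t + deriv (fun y => ρ t y * u t y) x = 0) :
    ∀ t ∈ Icc (0:ℝ) T,
      ((⨆ x : ℝ, ρ t x) ≤ (⨆ x : ℝ, ρ 0 x) *
        Real.exp (∫ s in (0:ℝ)..t, ⨆ x : ℝ, |deriv (fun y => u s y) x|)) ∧
      ((⨅ x : ℝ, ρ 0 x) *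
        Real.exp (-∫ s in (0:ℝ)..t, ⨆ x : ℝ, |deriv (fun y => u s y) x|)
          ≤ ⨅ x : ℝ, ρ t x) := by
  intro t ht
  have hder : ∀ s x : ℝ, deriv (fun y => u s y) x = Dx u s x :=
    fun s x => (hasDerivAt_Dx hu s x).deriv
  simp only [hder]
  constructor
  · exact sup_bound hL hρ hu hρpos hρper huper hcont t ht
  · exact inf_bound hL hρ hu hρpos hρper huper hcont t ht
end
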